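/- arXiv:2208.10389 — 8 statements merged into one kernel-verified Lean document; each statement's English description precedes it below -/
import Mathlib

section
/- Let H be a PICOD problem on m messages in which every request-set R_1,...,R_n is nonempty. Then for every prime power q, β_q(H) ≤ Δ(H): there exists a PICOD scheme for H over F_q of length at most the maximum degree Δ(H). -/
/-!
Choose a set `S` of messages that meets every request-set in at most one message and is
maximal with this property, and broadcast `∑ v ∈ S, b v`. A client whose request-set meets `S`,
say in `u`, has all other summands as side information and decodes `b u`. By maximality, every
message requested by some client is also requested by a client served this way, so the clients
not yet served form a PICOD problem of maximum degree at most `Δ - 1`; induct on `Δ`.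
-/

/-- A PICOD scheme of length `ℓ` over the field `F` for the PICOD problem with
vertex type `V`, client index type `ι`, and request-sets `R i`:
an encoder, a decoding choice `d i ∈ R i` for each client, and decoders such
that each client `i` recovers `b (d i)` from the encoded transmissions and its
side-information (the messages outside its request-set). -/
def HasPICODScheme {V ι : Type} (R : ι → Finset V) (F : Type) [Field F]
    (ℓ : ℕ) : Prop :=
  ∃ (Enc : (V → F) → (Fin ℓ → F)) (d : ι → V)
    (Dec : (i : ι) → (Fin ℓ → F) → ({j : V // j ∉ R i} → F) → F),
    (∀ i, d i ∈ R i) ∧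
    ∀ (i : ι) (b : V → F), Dec i (Enc b) (fun j => b j.1) = b (d i)

/-- `β_q(H)`: the minimum length of a PICOD scheme over `F` (`= F_q`). -/
noncomputable def picodBeta {V ι : Type} (R : ι → Finset V) (F : Type)
    [Field F] : ℕ :=
  sInf {ℓ | HasPICODScheme R F ℓ}

/-- `β(H)`: the minimum of `β_q(H)` over all prime powers `q`. -/
noncomputable def picodBetaMin {V ι : Type} (R : ι → Finset V) : ℕ :=
  sInf {ℓ | ∃ (p k : ℕ) (hp : p.Prime), k ≠ 0 ∧
    haveI : Fact p.Prime := ⟨hp⟩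
    HasPICODScheme R (GaloisField p k) ℓ}

/-- The degree of a vertex: the number of request-sets containing it. -/
noncomputable def picodDegree {V ι : Type} [Fintype ι] (R : ι → Finset V) (v : V) : ℕ :=
  (@Finset.filter _ (fun i => v ∈ R i) (Classical.decPred _) Finset.univ).card

/-- The maximum degree `Δ(H)` of the hypergraph. -/
noncomputable def maxDegree {V ι : Type} [Fintype V] [Fintype ι] (R : ι → Finset V) : ℕ :=
  Finset.univ.sup (picodDegree R)

/-- A nested collection of hyperedges of length `L`: levels `E 0, ..., E (L-1)`
of edges of the hypergraph, `|E i| = 2^i`, and every edge of a level contains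
two disjoint nonempty edges of the next level. -/
def IsNestedCollection {V ι : Type} [DecidableEq V] (R : ι → Finset V)
    (L : ℕ) (E : Fin L → Finset (Finset V)) : Prop :=
  (∀ i : Fin L, ∀ e ∈ E i, ∃ j : ι, R j = e) ∧
  (∀ i : Fin L, (E i).card = 2 ^ (i : ℕ)) ∧
  (∀ i : Fin L, ∀ hi : (i : ℕ) + 1 < L, ∀ e ∈ E i,
    ∃ e' ∈ E ⟨(i : ℕ) + 1, hi⟩, ∃ e'' ∈ E ⟨(i : ℕ) + 1, hi⟩,
      e'.Nonempty ∧ e''.Nonempty ∧ e' ⊂ e ∧ e'' ⊂ e ∧ e' ∩ e'' = ∅)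

/-- The nesting number `η(H)`: the maximum length of a nested collection. -/
noncomputable def nestingNumber {V ι : Type} [DecidableEq V]
    (R : ι → Finset V) : ℕ :=
  sSup {L | ∃ E : Fin L → Finset (Finset V), IsNestedCollection R L E}

open Finset

section

variable {V ι : Type}

def IsStronglyIndependent [DecidableEq V] (R : ι → Finset V) (S : Finset V) : Prop :=
  ∀ i, #(R i ∩ S) ≤ 1

theorem picodDegree_eq_natCard [Fintype ι] (R : ι → Finset V) (v : V) :
    picodDegree R v = Nat.card {i // v ∈ R i} := by
  classical
  rw [picodDegree, Nat.card_eq_fintype_card, Fintype.card_subtype,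
    Finset.filter_congr_decidable]

theorem picodDegree_le_maxDegree [Fintype V] [Fintype ι] (R : ι → Finset V) (v : V) :
    picodDegree R v ≤ maxDegree R :=
  le_sup (mem_univ v)

theorem picodDegree_subtype_lt [Fintype ι] (R : ι → Finset V) {p : ι → Prop} [DecidablePred p]
    {v : V} {i : ι} (hv : v ∈ R i) (hi : ¬ p i) :
    picodDegree (fun j : Subtype p => R j) v < picodDegree R v := by
  rw [picodDegree_eq_natCard, picodDegree_eq_natCard,
    Nat.card_congr ((Equiv.subtypeSubtypeEquivSubtypeInter p fun j => v ∈ R j).trans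
      ((Equiv.subtypeEquivRight fun _ => and_comm).trans
        (Equiv.subtypeSubtypeEquivSubtypeInter (fun j => v ∈ R j) p).symm))]
  exact Finite.card_subtype_lt (x := ⟨i, hv⟩) hi

theorem isEmpty_of_maxDegree_eq_zero [Fintype V] [Fintype ι] {R : ι → Finset V}
    (hR : ∀ i, (R i).Nonempty) (h0 : maxDegree R = 0) : IsEmpty ι := by
  refine ⟨fun i => ?_⟩
  obtain ⟨v, hv⟩ := hR i
  have hpos : 0 < picodDegree R v := by
    rw [picodDegree_eq_natCard]
    exact Finite.card_pos_iff.mpr ⟨⟨i, hv⟩⟩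
  have := picodDegree_le_maxDegree R v
  omega

theorem HasPICODScheme.of_isEmpty [IsEmpty ι] (R : ι → Finset V) (F : Type) [Field F]
    (ℓ : ℕ) : HasPICODScheme R F ℓ :=
  ⟨fun _ _ => 0, isEmptyElim, fun _ _ _ => 0, isEmptyElim, isEmptyElim⟩

variable [DecidableEq V]

theorem exists_mem_not_disjoint_of_maximal {R : ι → Finset V} {S : Finset V}
    (hS : Maximal (IsStronglyIndependent R) S) {v : V} {i : ι} (hv : v ∈ R i) :
    ∃ j, v ∈ R j ∧ ¬ Disjoint (R j) S := by
  by_contra! hdisj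
  have hvS : v ∉ S := disjoint_left.mp (hdisj i hv) hv
  have hins : IsStronglyIndependent R (insert v S) := by
    intro j
    by_cases hvj : v ∈ R j
    · rw [inter_insert_of_mem hvj, disjoint_iff_inter_eq_empty.mp (hdisj j hvj)]
      simp
    · rw [inter_insert_of_notMem hvj]
      exact hS.prop j
  exact hvS (hS.eq_of_ge hins (subset_insert v S) ▸ mem_insert_self v S)

theorem maxDegree_subtype_disjoint_le [Fintype V] [Fintype ι] {R : ι → Finset V}
    {S : Finset V} (hS : Maximal (IsStronglyIndependent R) S) :
    maxDegree (fun j : {i // Disjoint (R i) S} => R j) ≤ maxDegree R - 1 := by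
  refine Finset.sup_le fun v _ => ?_
  by_cases hv : ∃ i, v ∈ R i
  · obtain ⟨i, hvi⟩ := hv
    obtain ⟨j, hvj, hj⟩ := exists_mem_not_disjoint_of_maximal hS hvi
    have := picodDegree_subtype_lt (p := fun i => Disjoint (R i) S) R hvj hj
    have := picodDegree_le_maxDegree R v
    omega
  · push Not at hv
    simp [picodDegree_eq_natCard, hv]

theorem HasPICODScheme.of_isStronglyIndependent {F : Type} [Field F] {R : ι → Finset V}
    {S : Finset V} {ℓ : ℕ} (hS : IsStronglyIndependent R S)
    (h : HasPICODScheme (fun j : {i // Disjoint (R i) S} => R j) F ℓ) :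
    HasPICODScheme R F (ℓ + 1) := by
  obtain ⟨Enc, d, Dec, hd, hDec⟩ := h
  have hsingleton (i : ι) (hi : ¬ Disjoint (R i) S) : ∃ u, R i ∩ S = {u} :=
    card_eq_one.mp (le_antisymm (hS i) (not_disjoint_iff_nonempty_inter.mp hi).card_pos)
  choose u hu using hsingleton
  -- A client `i` meeting `S` knows every summand of `∑ v ∈ S, b v` except `b (u i hi)`.
  refine ⟨fun b => Fin.cons (∑ v ∈ S, b v) (Enc b),
    fun i => if hi : Disjoint (R i) S then d ⟨i, hi⟩ else u i hi,
    fun i y s => if hi : Disjoint (R i) S then Dec ⟨i, hi⟩ (Fin.tail y) s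
      else y 0 - ∑ v ∈ (S \ R i).attach, s ⟨v, (mem_sdiff.1 v.2).2⟩, fun i => ?_, fun i b => ?_⟩
  · dsimp only
    split_ifs with hi
    · exact hd _
    · exact mem_of_mem_inter_left (hu i hi ▸ mem_singleton_self (u i hi))
  · dsimp only
    split_ifs with hi
    · simpa using hDec ⟨i, hi⟩ b
    · rw [Fin.cons_zero, sum_attach (S \ R i) b, ← sum_inter_add_sum_sdiff S (R i) b,
        inter_comm, hu i hi, sum_singleton, add_sub_cancel_right]

end

theorem hasPICODScheme_of_maxDegree_le {V : Type} [Fintype V] [DecidableEq V] (F : Type)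
    [Field F] (Δ : ℕ) : ∀ {ι : Type} [Fintype ι] (R : ι → Finset V),
      (∀ i, (R i).Nonempty) → maxDegree R ≤ Δ → HasPICODScheme R F Δ := by
  induction Δ with
  | zero =>
    intro ι _ R hR h0
    have := isEmpty_of_maxDegree_eq_zero hR (Nat.le_zero.mp h0)
    exact .of_isEmpty R F 0
  | succ Δ ih =>
    intro ι _ R hR hΔ
    obtain ⟨S, -, hS⟩ :=
      Finite.exists_le_maximal (p := IsStronglyIndependent R) (a := ∅) fun i => by simp
    refine .of_isStronglyIndependent hS.prop (ih _ (fun j => hR j) ?_)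
    have := maxDegree_subtype_disjoint_le hS
    omega

theorem picod_beta_le_maxDegree_general (m n : ℕ) (R : Fin n → Finset (Fin m))
    (hR : ∀ i, (R i).Nonempty)
    (F : Type) [Field F] :
    picodBeta R F ≤ maxDegree R :=
  Nat.sInf_le (hasPICODScheme_of_maxDegree_le F _ R hR le_rfl)

/-- For a PICOD problem on `m` messages with all request-sets
nonempty, and for every prime power `q` (i.e., every finite field `F`),
`β_q(H) ≤ Δ(H)`. -/
theorem picod_beta_le_maxDegree (m n : ℕ) (R : Fin n → Finset (Fin m))
    (hR : ∀ i, (R i).Nonempty)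
    (F : Type) [Field F] [Fintype F] :
    picodBeta R F ≤ maxDegree R :=
  picod_beta_le_maxDegree_general m n R hR F
end

section
/- Let H be a PICOD problem on m messages in which every request-set is nonempty, and suppose that the nesting number equals the maximum degree, η(H) = Δ(H). Then for every prime power q, β_q(H) = Δ(H), and hence β(H) = Δ(H). -/
open Finset in
lemma picod_cover {m n : ℕ} (R : Fin n → Finset (Fin m)) (hR : ∀ i, (R i).Nonempty) :
    ∀ (δ : ℕ) (T : Finset (Fin n)),
      (∀ v : Fin m, (T.filter (fun i => v ∈ R i)).card ≤ δ) →
      ∃ S : ℕ → Finset (Fin m), ∀ i ∈ T, ∃ k < δ, ∃ dv, R i ∩ S k = {dv} := by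
  intro δ
  induction δ with
  | zero =>
    intro T hT
    refine ⟨fun _ => ∅, fun i hi => ?_⟩
    exfalso
    obtain ⟨v, hv⟩ := hR i
    have hmem : i ∈ T.filter (fun i => v ∈ R i) := mem_filter.mpr ⟨hi, hv⟩
    have := hT v
    have := card_pos.mpr ⟨i, hmem⟩
    omega
  | succ δ ih =>
    intro T hT
    classical
    have h𝒮 : ((Finset.univ : Finset (Fin m)).powerset.filter
        (fun S => ∀ i ∈ T, (R i ∩ S).card ≤ 1)).Nonempty :=
      ⟨∅, by simp⟩
    obtain ⟨S0, hS0mem, hS0max⟩ := Finset.exists_max_image _ Finset.card h𝒮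
    have hS0prop : ∀ i ∈ T, (R i ∩ S0).card ≤ 1 := (Finset.mem_filter.mp hS0mem).2
    set T' := T.filter (fun i => R i ∩ S0 = ∅) with hT'
    have hdeg' : ∀ v : Fin m, (T'.filter (fun i => v ∈ R i)).card ≤ δ := by
      intro v
      by_cases hv : v ∈ S0
      · have hempty : T'.filter (fun i => v ∈ R i) = ∅ := by
          rw [Finset.eq_empty_iff_forall_notMem]
          intro i hi
          simp only [hT', Finset.mem_filter] at hi
          obtain ⟨⟨_, hRe⟩, hvRi⟩ := hi
          have : v ∈ R i ∩ S0 := Finset.mem_inter.mpr ⟨hvRi, hv⟩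
          rw [hRe] at this
          exact absurd this (Finset.notMem_empty v)
        rw [hempty]; simp
      · have hnotall : ¬ (∀ i ∈ T, (R i ∩ insert v S0).card ≤ 1) := by
          intro hall
          have hmem : insert v S0 ∈ (Finset.univ : Finset (Fin m)).powerset.filter
              (fun S => ∀ i ∈ T, (R i ∩ S).card ≤ 1) :=
            Finset.mem_filter.mpr ⟨Finset.mem_powerset.mpr (Finset.subset_univ _), hall⟩
          have := hS0max _ hmem
          rw [Finset.card_insert_of_notMem hv] at this
          omega
        push_neg at hnotall
        obtain ⟨i0, hi0T, hi0⟩ := hnotall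
        have hvR : v ∈ R i0 := by
          by_contra hvR
          have : R i0 ∩ insert v S0 = R i0 ∩ S0 := by
            ext x
            simp only [Finset.mem_inter, Finset.mem_insert]
            constructor
            · rintro ⟨hx, rfl | hx2⟩
              · exact absurd hx hvR
              · exact ⟨hx, hx2⟩
            · rintro ⟨hx, hx2⟩; exact ⟨hx, Or.inr hx2⟩
          rw [this] at hi0
          have := hS0prop i0 hi0T
          omega
        have hi0ne : R i0 ∩ S0 ≠ ∅ := by
          intro hemp
          have hsub : R i0 ∩ insert v S0 ⊆ insert v (R i0 ∩ S0) := by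
            intro x hx
            simp only [Finset.mem_inter, Finset.mem_insert] at hx ⊢
            rcases hx with ⟨hx1, rfl | hx2⟩
            · exact Or.inl rfl
            · exact Or.inr ⟨hx1, hx2⟩
          have := Finset.card_le_card hsub
          rw [hemp] at this
          simp at this
          omega
        have hi0notT' : i0 ∉ T' := by
          simp only [hT', Finset.mem_filter]
          tauto
        have hsub : T'.filter (fun i => v ∈ R i) ⊆ (T.filter (fun i => v ∈ R i)).erase i0 := by
          intro i hi
          simp only [Finset.mem_filter, hT'] at hi
          refine Finset.mem_erase.mpr ⟨?_, Finset.mem_filter.mpr ⟨hi.1.1, hi.2⟩⟩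
          rintro rfl
          exact hi0notT' (Finset.mem_filter.mpr hi.1)
        have h1 := Finset.card_le_card hsub
        have h2 : i0 ∈ T.filter (fun i => v ∈ R i) := Finset.mem_filter.mpr ⟨hi0T, hvR⟩
        have h3 := Finset.card_erase_of_mem h2
        have h4 := hT v
        omega
    obtain ⟨S', hS'⟩ := ih T' hdeg'
    refine ⟨fun k => if k = δ then S0 else S' k, fun i hi => ?_⟩
    by_cases hiT' : i ∈ T'
    · obtain ⟨k, hk, dv, hdv⟩ := hS' i hiT'
      exact ⟨k, by omega, dv, by simpa [Nat.ne_of_lt hk] using hdv⟩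
    · have hne : R i ∩ S0 ≠ ∅ := by
        intro hemp
        exact hiT' (Finset.mem_filter.mpr ⟨hi, hemp⟩)
      have hle := hS0prop i hi
      have hpos := Finset.card_pos.mpr (Finset.nonempty_of_ne_empty hne)
      have hcard : (R i ∩ S0).card = 1 := by omega
      obtain ⟨dv, hdv⟩ := Finset.card_eq_one.mp hcard
      exact ⟨δ, Nat.lt_succ_self δ, dv, by simpa using hdv⟩

lemma hasScheme_maxDegree {m n : ℕ} (R : Fin n → Finset (Fin m)) (hR : ∀ i, (R i).Nonempty)
    (F : Type) [Field F] : HasPICODScheme R F (maxDegree R) := by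
  classical
  have hdeg : ∀ v : Fin m, (Finset.univ.filter (fun i => v ∈ R i)).card ≤ maxDegree R := by
    intro v
    have h1 : picodDegree R v ≤ maxDegree R := Finset.le_sup (Finset.mem_univ v)
    have h2 : picodDegree R v = (Finset.univ.filter (fun i => v ∈ R i)).card := by
      unfold picodDegree
      congr
  -- fix instance mismatch
    rw [h2] at h1
    exact h1
  obtain ⟨S, hS⟩ := picod_cover R hR (maxDegree R) Finset.univ hdeg
  choose! k hk dv hdv using fun i => hS i (Finset.mem_univ i)
  have hdvR : ∀ i, dv i ∈ R i := by
    intro i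
    have : dv i ∈ R i ∩ S (k i) := by rw [hdv i]; exact Finset.mem_singleton_self _
    exact (Finset.mem_inter.mp this).1
  refine ⟨fun b t => ∑ v ∈ S t.1, b v, dv,
    fun i t s => t ⟨k i, hk i⟩ - ∑ x ∈ (S (k i) \ R i).attach, s ⟨x.1, (Finset.mem_sdiff.mp x.2).2⟩,
    hdvR, ?_⟩
  intro i b
  simp only
  have hattach : ∑ x ∈ (S (k i) \ R i).attach,
      (fun j : {j : Fin m // j ∉ R i} => b j.1) ⟨x.1, (Finset.mem_sdiff.mp x.2).2⟩
      = ∑ v ∈ S (k i) \ R i, b v := by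
    rw [← Finset.sum_attach (S (k i) \ R i) (fun v => b v)]
  rw [hattach]
  have hsplit : ∑ v ∈ S (k i) \ (R i ∩ S (k i)), b v + ∑ v ∈ R i ∩ S (k i), b v
      = ∑ v ∈ S (k i), b v :=
    Finset.sum_sdiff (Finset.inter_subset_right)
  have hdiff : S (k i) \ (R i ∩ S (k i)) = S (k i) \ R i := by
    ext x; simp only [Finset.mem_sdiff, Finset.mem_inter]; tauto
  rw [hdiff] at hsplit
  rw [← hsplit, hdv i, Finset.sum_singleton]
  ring

lemma nested_le_scheme {m n L ℓ : ℕ} {R : Fin n → Finset (Fin m)} {F : Type}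
    [Field F] [Fintype F]
    (E : Fin L → Finset (Finset (Fin m))) (hE : IsNestedCollection R L E)
    (hS : HasPICODScheme R F ℓ) : L ≤ ℓ := by
  classical
  obtain ⟨Enc, d, Dec, hd, hDec⟩ := hS
  have helper : ∀ (j : Fin n) (b b' : Fin m → F), Enc b = Enc b' →
      (∀ v, v ∉ R j → b v = b' v) → b (d j) = b' (d j) := by
    intro j b b' hEnc hagree
    have hside : (fun x : {v : Fin m // v ∉ R j} => b x.1) = fun x => b' x.1 :=
      funext fun x => hagree x.1 x.2
    calc b (d j) = Dec j (Enc b) (fun x => b x.1) := (hDec j b).symm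
      _ = Dec j (Enc b') (fun x => b' x.1) := by rw [hEnc, hside]
      _ = b' (d j) := hDec j b'
  have chain : ∀ (k t : ℕ) (ht : t + k + 1 = L) (j : Fin n),
      R j ∈ E ⟨t, by omega⟩ →
      ∃ D : Fin (k + 1) → Fin m, Function.Injective D ∧ (∀ s, D s ∈ R j) ∧
        ∀ b b' : Fin m → F, Enc b = Enc b' →
          (∀ v, v ∉ Set.range D → b v = b' v) → b = b' := by
    intro k
    induction k with
    | zero =>
      intro t ht j hj
      refine ⟨fun _ => d j, fun a b _ => Fin.ext (by omega), fun _ => hd j, ?_⟩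
      intro b b' hEnc hagree
      have hne : ∀ v, v ≠ d j → b v = b' v := by
        intro v hv
        refine hagree v ?_
        rintro ⟨s, rfl⟩
        exact hv rfl
      funext v
      by_cases hv : v = d j
      · subst hv
        exact helper j b b' hEnc (fun u hu => hne u (fun h => hu (h ▸ hd j)))
      · exact hne v hv
    | succ k ih =>
      intro t ht j hj
      have ht1 : t + 1 < L := by omega
      obtain ⟨e', he', e'', he'', hne', hne'', hsub', hsub'', hdisj⟩ :=
        hE.2.2 ⟨t, by omega⟩ ht1 (R j) hj
      have hpick : ∃ e ∈ E ⟨t + 1, ht1⟩, e ⊂ R j ∧ d j ∉ e := by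
        by_cases hmem : d j ∈ e'
        · refine ⟨e'', he'', hsub'', fun hc => ?_⟩
          have : d j ∈ e' ∩ e'' := Finset.mem_inter.mpr ⟨hmem, hc⟩
          rw [hdisj] at this
          exact absurd this (Finset.notMem_empty _)
        · exact ⟨e', he', hsub', hmem⟩
      obtain ⟨e, heE, hesub, hednotin⟩ := hpick
      obtain ⟨j', hj'⟩ := hE.1 ⟨t + 1, ht1⟩ e heE
      have hj'mem : R j' ∈ E ⟨t + 1, by omega⟩ := hj' ▸ heE
      obtain ⟨D', hD'inj, hD'mem, hD'key⟩ := ih (t + 1) (by omega) j' hj'mem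
      have hD'R : ∀ s, D' s ∈ R j := fun s => hesub.subset (hj' ▸ hD'mem s)
      have hdj_not : d j ∉ Set.range D' := by
        rintro ⟨s, hs⟩
        exact hednotin (hs ▸ (hj' ▸ hD'mem s))
      refine ⟨Fin.cons (d j) D', Fin.cons_injective_of_injective hdj_not hD'inj, ?_, ?_⟩
      · intro s
        refine Fin.cases ?_ ?_ s
        · simpa using hd j
        · intro s'
          simpa using hD'R s'
      · intro b b' hEnc hagree
        have hrange : Set.range (Fin.cons (d j) D' : Fin (k + 2) → Fin m)
            = insert (d j) (Set.range D') := Fin.range_cons _ _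
        have hRsub : ∀ v, v ∉ R j → v ∉ Set.range (Fin.cons (d j) D' : Fin (k + 2) → Fin m) := by
          intro v hv hvr
          rw [hrange, Set.mem_insert_iff] at hvr
          rcases hvr with rfl | ⟨s, rfl⟩
          · exact hv (hd j)
          · exact hv (hD'R s)
        have hdj_eq : b (d j) = b' (d j) :=
          helper j b b' hEnc (fun v hv => hagree v (hRsub v hv))
        refine hD'key b b' hEnc ?_
        intro v hv
        by_cases hvd : v = d j
        · subst hvd; exact hdj_eq
        · refine hagree v ?_
          rw [hrange, Set.mem_insert_iff]
          rintro (rfl | hmem)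
          · exact hvd rfl
          · exact hv hmem
  rcases Nat.eq_zero_or_pos L with rfl | hL
  · exact Nat.zero_le _
  obtain ⟨L', rfl⟩ : ∃ L', L = L' + 1 := ⟨L - 1, by omega⟩
  have h0 : (0 : ℕ) < L' + 1 := Nat.succ_pos _
  have hone : (E ⟨0, h0⟩).Nonempty := by
    apply Finset.card_pos.mp
    rw [hE.2.1 ⟨0, h0⟩]
    simp
  obtain ⟨e0, he0⟩ := hone
  obtain ⟨j0, hj0⟩ := hE.1 ⟨0, h0⟩ e0 he0
  obtain ⟨D, hDinj, hDmem, hkey⟩ := chain L' 0 (by omega) j0 (hj0 ▸ he0)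
  set emb : (Fin (L' + 1) → F) → (Fin m → F) :=
    fun c v => if h : ∃ s, D s = v then c h.choose else 0 with hemb
  have hev : ∀ c s, emb c (D s) = c s := by
    intro c s
    have hex : ∃ s', D s' = D s := ⟨s, rfl⟩
    simp only [hemb, dif_pos hex]
    congr 1
    exact hDinj hex.choose_spec
  have hoff : ∀ c v, v ∉ Set.range D → emb c v = 0 := by
    intro c v hv
    simp only [hemb]
    rw [dif_neg (fun h => hv ⟨h.choose, h.choose_spec⟩)]
  have hinj : Function.Injective (fun c => Enc (emb c)) := by
    intro c c' hcc
    have heq := hkey (emb c) (emb c') hcc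
      (fun v hv => by rw [hoff c v hv, hoff c' v hv])
    funext s
    have := congrFun heq (D s)
    rwa [hev, hev] at this
  have hcard := Fintype.card_le_of_injective _ hinj
  rw [Fintype.card_fun, Fintype.card_fun, Fintype.card_fin, Fintype.card_fin] at hcard
  exact (Nat.pow_le_pow_iff_right Fintype.one_lt_card).mp hcard

/-- If all request-sets are nonempty and the nesting number equals
the maximum degree, `η(H) = Δ(H)`, then `β_q(H) = Δ(H)` for every prime power
`q` (i.e., every finite field `F`), and hence `β(H) = Δ(H)`. -/
theorem picod_beta_eq_maxDegree_of_nesting_eq_maxDegree (m n : ℕ)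
    (R : Fin n → Finset (Fin m))
    (hR : ∀ i, (R i).Nonempty)
    (h : nestingNumber R = maxDegree R) :
    (∀ (F : Type) [Field F] [Fintype F], picodBeta R F = maxDegree R) ∧
    picodBetaMin R = maxDegree R := by
  classical
  have hupper : ∀ (F : Type) [Field F], HasPICODScheme R F (maxDegree R) :=
    fun F _ => hasScheme_maxDegree R hR F
  have hlow : ∀ (F : Type) [Field F] [Fintype F] (ℓ : ℕ),
      HasPICODScheme R F ℓ → maxDegree R ≤ ℓ := by
    intro F _ _ ℓ hsch
    rw [← h]
    unfold nestingNumber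
    apply csSup_le
    · exact ⟨0, Fin.elim0, fun i => i.elim0, fun i => i.elim0, fun i => i.elim0⟩
    · rintro L ⟨E, hE⟩
      exact nested_le_scheme E hE hsch
  constructor
  · intro F _ _
    refine le_antisymm (Nat.sInf_le (hupper F)) (le_csInf ⟨_, hupper F⟩ ?_)
    intro ℓ hℓ
    exact hlow F ℓ hℓ
  · have hFact : Fact (Nat.Prime 2) := ⟨Nat.prime_two⟩
    refine le_antisymm (Nat.sInf_le ?_) (le_csInf ?_ ?_)
    · exact ⟨2, 1, Nat.prime_two, one_ne_zero, hupper _⟩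
    · exact ⟨maxDegree R, 2, 1, Nat.prime_two, one_ne_zero, hupper _⟩
    · rintro ℓ ⟨p, k, hp, hk, hsch⟩
      haveI : Fact p.Prime := ⟨hp⟩
      haveI : Fintype (GaloisField p k) := Fintype.ofFinite _
      exact hlow (GaloisField p k) ℓ hsch
end

section
/- Let H be a PICOD problem that is the disjoint union of PICOD problems H_1,...,H_t: the vertex sets V(H_1),...,V(H_t) are pairwise disjoint, V(H) is their union, and every request-set of H is a request-set of exactly one H_i (and conversely). Assume every request-set is nonempty. Then for every prime power q, β_q(H) = max_{i ∈ [t]} β_q(H_i). -/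
lemma picod_trivial {V ι : Type} [Fintype V] (R : ι → Finset V)
    (hR : ∀ i, (R i).Nonempty) (F : Type) [Field F] :
    HasPICODScheme R F (Fintype.card V) := by
  classical
  let e := Fintype.equivFin V
  exact ⟨fun b k => b (e.symm k), fun i => (hR i).choose,
    fun i enc _ => enc (e ((hR i).choose)),
    fun i => (hR i).choose_spec, fun i b => by simp⟩

lemma picod_mono {V ι : Type} (R : ι → Finset V) (F : Type) [Field F]
    {ℓ ℓ' : ℕ} (h : ℓ ≤ ℓ') :
    HasPICODScheme R F ℓ → HasPICODScheme R F ℓ' := by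
  rintro ⟨Enc, d, Dec, hd, hdec⟩
  refine ⟨fun b k => if hk : (k : ℕ) < ℓ then Enc b ⟨k, hk⟩ else 0, d,
    fun i enc side => Dec i (fun k => enc ⟨k, lt_of_lt_of_le k.2 h⟩) side, hd, ?_⟩
  intro i b
  have hfun : (fun k : Fin ℓ =>
      (fun k' : Fin ℓ' => if hk : (k' : ℕ) < ℓ then Enc b ⟨k', hk⟩ else 0)
        ⟨k.1, lt_of_lt_of_le k.2 h⟩) = Enc b := by
    funext k; simp
  simpa [hfun] using hdec i b

lemma picod_notmem_aux {t : ℕ} {V : Fin t → Type} {ι : Fin t → Type}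
    (R : (i : Fin t) → ι i → Finset (V i)) (i : Fin t) (c : ι i)
    (x : {x : (j : Fin t) × V j //
      x ∉ (R i c).map ⟨Sigma.mk i, sigma_mk_injective⟩})
    (hx : x.1.1 = i) : cast (congrArg V hx) x.1.2 ∉ R i c := by
  obtain ⟨⟨j, v⟩, hnx⟩ := x
  dsimp at hx
  subst hx
  exact fun hmem => hnx (Finset.mem_map_of_mem _ hmem)

lemma picod_restrict (t : ℕ) (V : Fin t → Type) (ι : Fin t → Type)
    (R : (i : Fin t) → ι i → Finset (V i)) (F : Type) [Field F] {L : ℕ}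
    (h : HasPICODScheme (fun c : (i : Fin t) × ι i =>
        (R c.1 c.2).map ⟨Sigma.mk c.1, sigma_mk_injective⟩) F L)
    (i : Fin t) : HasPICODScheme (R i) F L := by
  classical
  obtain ⟨Enc, d, Dec, hd, hdec⟩ := h
  let ext : (V i → F) → ((x : (j : Fin t) × V j) → F) := fun b x =>
    if hx : x.1 = i then b (cast (congrArg V hx) x.2) else 0
  have hdi : ∀ c : ι i, ∃ u ∈ R i c, (⟨i, u⟩ : (j : Fin t) × V j) = d ⟨i, c⟩ := by
    intro c
    have := hd ⟨i, c⟩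
    simpa [Finset.mem_map] using this
  refine ⟨fun b => Enc (ext b), fun c => (hdi c).choose,
    fun c enc side => Dec ⟨i, c⟩ enc (fun x =>
      if hx : x.1.1 = i then side ⟨cast (congrArg V hx) x.1.2,
        picod_notmem_aux R i c x hx⟩ else 0),
    fun c => (hdi c).choose_spec.1, ?_⟩
  intro c b
  have key : (fun x : {x : (j : Fin t) × V j //
        x ∉ (R i c).map ⟨Sigma.mk i, sigma_mk_injective⟩} =>
      if hx : x.1.1 = i then
        (fun v : {v : V i // v ∉ R i c} => b v.1)
          ⟨cast (congrArg V hx) x.1.2, picod_notmem_aux R i c x hx⟩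
      else 0) = fun x => ext b x.1 := by
    funext x
    by_cases hx : x.1.1 = i
    · simp only [hx, dif_pos, ext]
    · simp [ext, hx]
  simp only [key]
  rw [hdec ⟨i, c⟩ (ext b)]
  conv_lhs => rw [← (hdi c).choose_spec.2]
  simp [ext]

lemma picod_nmem_same {t : ℕ} {V : Fin t → Type} {ι : Fin t → Type}
    (R : (i : Fin t) → ι i → Finset (V i)) (c : (i : Fin t) × ι i)
    (v : {v : V c.1 // v ∉ R c.1 c.2}) :
    (⟨c.1, v.1⟩ : (j : Fin t) × V j) ∉
      (R c.1 c.2).map ⟨Sigma.mk c.1, sigma_mk_injective⟩ :=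
  fun hm => v.2 ((Finset.mem_map' _).1 hm)

lemma picod_nmem_other {t : ℕ} {V : Fin t → Type} {ι : Fin t → Type}
    (R : (i : Fin t) → ι i → Finset (V i)) (c : (i : Fin t) × ι i)
    (j : Fin t) (hj : ¬ j = c.1) (v : V j) :
    (⟨j, v⟩ : (j : Fin t) × V j) ∉
      (R c.1 c.2).map ⟨Sigma.mk c.1, sigma_mk_injective⟩ := by
  intro hm
  simp only [Finset.mem_map, Function.Embedding.coeFn_mk] at hm
  obtain ⟨u, _, heq⟩ := hm
  exact hj (congrArg Sigma.fst heq).symm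

lemma picod_combine (t : ℕ) (V : Fin t → Type) (ι : Fin t → Type)
    (R : (i : Fin t) → ι i → Finset (V i)) (F : Type) [Field F] {L : ℕ}
    (h : ∀ i, HasPICODScheme (R i) F L) :
    HasPICODScheme (fun c : (i : Fin t) × ι i =>
        (R c.1 c.2).map ⟨Sigma.mk c.1, sigma_mk_injective⟩) F L := by
  classical
  choose Enc d Dec hd hdec using h
  refine ⟨fun b k => ∑ j : Fin t, Enc j (fun v => b ⟨j, v⟩) k,
    fun c => ⟨c.1, d c.1 c.2⟩,
    fun c enc side => Dec c.1 c.2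
      (fun k => enc k - ∑ j : Fin t,
        if hj : j = c.1 then 0
        else Enc j (fun v => side ⟨⟨j, v⟩, picod_nmem_other R c j hj v⟩) k)
      (fun v => side ⟨⟨c.1, v.1⟩, picod_nmem_same R c v⟩), ?_, ?_⟩
  · intro c
    exact Finset.mem_map_of_mem _ (hd c.1 c.2)
  · intro c b
    have harg : (fun k : Fin L =>
        (∑ j : Fin t, Enc j (fun v => b ⟨j, v⟩) k) -
          ∑ j : Fin t, if hj : j = c.1 then 0
            else Enc j (fun v => b ⟨j, v⟩) k)
        = Enc c.1 (fun v => b ⟨c.1, v⟩) := by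
      funext k
      rw [← Finset.sum_sub_distrib, Finset.sum_eq_single c.1]
      · simp
      · intro j _ hj
        rw [dif_neg hj, sub_self]
      · simp
    show Dec c.1 c.2 _ (fun v => b ⟨c.1, v.1⟩) = b ⟨c.1, d c.1 c.2⟩
    rw [harg]
    exact hdec c.1 c.2 (fun v => b ⟨c.1, v⟩)

/-- If the PICOD problem `H` is the disjoint union of PICOD
problems `H 0, ..., H (t-1)` (modelled via sigma types: the vertex set of `H`
is the disjoint union of the vertex sets, and the clients of `H` are exactly
the clients of the components, with their request-sets embedded), and every
request-set is nonempty, then for every prime power `q` (finite field `F`),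
`β_q(H) = max_{i ∈ [t]} β_q(H_i)`. -/
theorem picod_beta_disjoint_union (t : ℕ)
    (V : Fin t → Type) [∀ i, Fintype (V i)]
    (ι : Fin t → Type) [∀ i, Fintype (ι i)]
    (R : (i : Fin t) → ι i → Finset (V i))
    (hR : ∀ i j, (R i j).Nonempty)
    (F : Type) [Field F] [Fintype F] :
    picodBeta (fun c : (i : Fin t) × ι i =>
        (R c.1 c.2).map ⟨Sigma.mk c.1, sigma_mk_injective⟩) F
      = Finset.univ.sup (fun i => picodBeta (R i) F) := by
  classical
  set Rbig := (fun c : (i : Fin t) × ι i =>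
      (R c.1 c.2).map ⟨Sigma.mk c.1, sigma_mk_injective⟩) with hRbigdef
  have hRbigne : ∀ c, (Rbig c).Nonempty := fun c =>
    ⟨⟨c.1, (hR c.1 c.2).choose⟩, Finset.mem_map_of_mem _ (hR c.1 c.2).choose_spec⟩
  have hbne : {ℓ | HasPICODScheme Rbig F ℓ}.Nonempty :=
    ⟨_, picod_trivial Rbig hRbigne F⟩
  have hcne : ∀ i, {ℓ | HasPICODScheme (R i) F ℓ}.Nonempty := fun i =>
    ⟨_, picod_trivial (R i) (hR i) F⟩
  apply le_antisymm
  · apply Nat.sInf_le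
    apply picod_combine
    intro i
    exact picod_mono (R i) F (Finset.le_sup (Finset.mem_univ i))
      (Nat.sInf_mem (hcne i))
  · apply Finset.sup_le
    intro i _
    exact Nat.sInf_le (picod_restrict t V ι R F (Nat.sInf_mem hbne) i)
end

section
/- Let H be a PICOD problem on m messages with vertex set V in which every request-set is nonempty, and let I be an independent set of H such that every edge of H contained in V \ I is nonempty. Then for every prime power q, β_q(H) ≤ 1 + β_q(H[V \ I]), where H[V \ I] is the induced subhypergraph on V \ I. -/
/-- For a PICOD problem `H` with all request-sets nonempty and an
independent set `I` (every edge meets `I` in at most one vertex) such that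
every edge contained in `V \ I` is nonempty, for every prime power `q`
(finite field `F`), `β_q(H) ≤ 1 + β_q(H[V \ I])`, where the induced
subhypergraph `H[V \ I]` has vertex set `V \ I` and as edges those request-sets
contained in `V \ I`. -/
theorem picod_beta_le_one_add_induced (m n : ℕ) (R : Fin n → Finset (Fin m))
    (hR : ∀ i, (R i).Nonempty)
    (I : Finset (Fin m))
    (hI : ∀ i, ((R i) ∩ I).card ≤ 1)
    (hne : ∀ i : Fin n, (∀ v ∈ R i, v ∉ I) → (R i).Nonempty)
    (F : Type) [Field F] [Fintype F] :
    picodBeta R F ≤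
      1 + picodBeta (fun i : {i : Fin n // ∀ v ∈ R i, v ∉ I} =>
        (R i.1).subtype (fun v => v ∉ I)) F := by
  classical
  set R' : {i : Fin n // ∀ v ∈ R i, v ∉ I} → Finset {v : Fin m // v ∉ I} :=
    fun i => (R i.1).subtype (fun v => v ∉ I) with hR'def
  have hex : HasPICODScheme R' F (Fintype.card {v : Fin m // v ∉ I}) := by
    have hne'' : ∀ i, (R' i).Nonempty := by
      intro i
      obtain ⟨v, hv⟩ := hne i.1 i.2
      exact ⟨⟨v, i.2 v hv⟩, Finset.mem_subtype.2 hv⟩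
    refine ⟨fun b k => b ((Fintype.equivFin {v : Fin m // v ∉ I}).symm k),
      fun i => (hne'' i).choose,
      fun i y s => y ((Fintype.equivFin {v : Fin m // v ∉ I}) (hne'' i).choose),
      fun i => (hne'' i).choose_spec, ?_⟩
    intro i b
    simp
  have hmem : picodBeta R' F ∈ {ℓ | HasPICODScheme R' F ℓ} :=
    Nat.sInf_mem ⟨_, hex⟩
  set L := picodBeta R' F with hL
  obtain ⟨Enc', d', Dec', hd', hDec'⟩ := hmem
  apply Nat.sInf_le
  refine ⟨fun b k => if h : 0 < (k : ℕ) then Enc' (fun v => b v.1) ⟨(k:ℕ) - 1, by omega⟩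
      else ∑ v ∈ I, b v,
    fun i => if h : (R i ∩ I).Nonempty then h.choose
      else (d' ⟨i, fun v hv hvI => h ⟨v, Finset.mem_inter.2 ⟨hv, hvI⟩⟩⟩).1,
    fun i y s => if h : (R i ∩ I).Nonempty then
        y ⟨0, by omega⟩ - ∑ w ∈ (I.erase h.choose).attach,
          s ⟨w.1, by
            intro hw
            have h1 := Finset.card_le_one.mp (hI i)
            have hwI := Finset.mem_of_mem_erase w.2
            have := h1 _ (Finset.mem_inter.2 ⟨hw, hwI⟩) _ h.choose_spec
            exact Finset.ne_of_mem_erase w.2 this⟩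
      else Dec' ⟨i, fun v hv hvI => h ⟨v, Finset.mem_inter.2 ⟨hv, hvI⟩⟩⟩
        (fun k => y ⟨(k:ℕ) + 1, by omega⟩)
        (fun j => s ⟨j.1.1, fun hj => j.2 (Finset.mem_subtype.2 hj)⟩),
    ?_, ?_⟩
  · intro i
    by_cases h : (R i ∩ I).Nonempty
    · simp only [dif_pos h]
      exact (Finset.mem_inter.1 h.choose_spec).1
    · simp only [dif_neg h]
      exact Finset.mem_subtype.1 (hd' _)
  · intro i b
    by_cases h : (R i ∩ I).Nonempty
    · simp only [dif_pos h]
      have h0 : ¬ (0 : ℕ) < ((⟨0, by omega⟩ : Fin (1 + L)) : ℕ) := by simp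
      rw [dif_neg h0, Finset.sum_attach (I.erase h.choose) (fun w => b w)]
      have hc : h.choose ∈ I := (Finset.mem_inter.1 h.choose_spec).2
      have := Finset.add_sum_erase I b hc
      rw [← this]
      ring
    · simp only [dif_neg h]
      have hEnc : (fun k : Fin L => if h' : 0 < (((⟨(k:ℕ) + 1, by omega⟩ : Fin (1 + L))) : ℕ)
          then Enc' (fun v => b v.1) ⟨((⟨(k:ℕ) + 1, by omega⟩ : Fin (1 + L)) : ℕ) - 1, by omega⟩
          else ∑ v ∈ I, b v) = Enc' (fun v => b v.1) := by
        funext k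
        rw [dif_pos (by simp)]
        congr 1
      rw [hEnc]
      exact hDec' _ (fun v => b v.1)
end

section
/- Let H be a hypergraph containing a nested collection E_1,...,E_L of length L, and let d be a function assigning to every edge R in E_1 ∪ ... ∪ E_L an element d(R) ∈ R. Then there exist edges R_1 ∈ E_1, R_2 ∈ E_2, ..., R_L ∈ E_L such that R_{i+1} ⊂ R_i for all i < L and, for all 1 ≤ j < i ≤ L, d(R_j) ∉ R_i. Consequently d(R_i) ∈ (∩_{j=1}^{i} R_j) \ (∪_{k=i+1}^{L} R_k) for every i ∈ [L], and the L elements d(R_1),...,d(R_L) are pairwise distinct. -/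
/-- Let `E 0, ..., E (L-1)` be a nested collection of length `L`
in the hypergraph and let `d` assign to every edge of the collection one of its
elements. Then there is a chain of edges `c i ∈ E i` with `c (i+1) ⊂ c i` and
`d (c j) ∉ c i` for `j < i`; consequently
`d (c i) ∈ (∩_{j ≤ i} c j) \ (∪_{k > i} c k)` for every `i`, and the values
`d (c 0), ..., d (c (L-1))` are pairwise distinct. -/
theorem nested_collection_decoding_chain (V : Type) [DecidableEq V] [Fintype V]
    (ι : Type) [Fintype ι] (R : ι → Finset V)
    (L : ℕ) (E : Fin L → Finset (Finset V))
    (hE : IsNestedCollection R L E)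
    (d : Finset V → V)
    (hd : ∀ i : Fin L, ∀ e ∈ E i, d e ∈ e) :
    ∃ c : Fin L → Finset V,
      (∀ i, c i ∈ E i) ∧
      (∀ i : Fin L, ∀ hi : (i : ℕ) + 1 < L, c ⟨(i : ℕ) + 1, hi⟩ ⊂ c i) ∧
      (∀ i j : Fin L, j < i → d (c j) ∉ c i) ∧
      (∀ i j : Fin L, j ≤ i → d (c i) ∈ c j) ∧
      (∀ i k : Fin L, i < k → d (c i) ∉ c k) ∧
      Function.Injective (fun i : Fin L => d (c i)) := by
  classical
  obtain ⟨hR, hcard, hnest⟩ := hE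
  rcases Nat.eq_zero_or_pos L with hL | hL
  · subst hL
    exact ⟨fun i => i.elim0, fun i => i.elim0, fun i => i.elim0,
      fun i => i.elim0, fun i => i.elim0, fun i => i.elim0, fun a => a.elim0⟩
  -- key step: from an edge at level n, pick a next edge avoiding d of it
  have key : ∀ n (h : n + 1 < L) (e : Finset V),
      e ∈ E ⟨n, Nat.lt_of_succ_lt h⟩ →
      ∃ e', e' ∈ E ⟨n + 1, h⟩ ∧ e' ⊂ e ∧ d e ∉ e' := by
    intro n h e he
    obtain ⟨e', he', e'', he'', _, _, hsub', hsub'', hdisj⟩ :=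
      hnest ⟨n, Nat.lt_of_succ_lt h⟩ h e he
    by_cases hmem : d e ∈ e'
    · refine ⟨e'', he'', hsub'', fun hx => ?_⟩
      have : d e ∈ e' ∩ e'' := Finset.mem_inter.mpr ⟨hmem, hx⟩
      simp [hdisj] at this
    · exact ⟨e', he', hsub', hmem⟩
  have h0 : (E ⟨0, hL⟩).Nonempty := by
    rw [← Finset.card_pos, hcard ⟨0, hL⟩]; simp
  let step : ℕ → Finset V → Finset V := fun n e =>
    if h : n + 1 < L then
      if h2 : e ∈ E ⟨n, Nat.lt_of_succ_lt h⟩ then (key n h e h2).choose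
      else ∅
    else ∅
  let g : ℕ → Finset V := fun n => Nat.rec h0.choose (fun n ih => step n ih) n
  have hg0 : g 0 = h0.choose := rfl
  have hgs : ∀ n, g (n + 1) = step n (g n) := fun n => rfl
  have hmem : ∀ n (hn : n < L), g n ∈ E ⟨n, hn⟩ := by
    intro n
    induction n with
    | zero => intro hn; exact h0.choose_spec
    | succ n ih =>
      intro hn
      have hn' : n < L := Nat.lt_of_succ_lt hn
      rw [hgs, show step n (g n) = (key n hn (g n) (ih hn')).choose from by
        simp [step, hn, ih hn']]
      exact (key n hn (g n) (ih hn')).choose_spec.1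
  have hstep : ∀ n (hn : n + 1 < L), g (n + 1) ⊂ g n ∧ d (g n) ∉ g (n + 1) := by
    intro n hn
    have hmn := hmem n (Nat.lt_of_succ_lt hn)
    have : g (n + 1) = (key n hn (g n) hmn).choose := by
      rw [hgs]; simp [step, hn, hmn]
    rw [this]
    exact ⟨(key n hn (g n) hmn).choose_spec.2.1, (key n hn (g n) hmn).choose_spec.2.2⟩
  have hchain : ∀ j i, j ≤ i → i < L → g i ⊆ g j := by
    intro j i hji
    induction i with
    | zero =>
      intro _
      have : j = 0 := Nat.le_zero.mp hji
      subst this; exact subset_rfl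
    | succ i ih =>
      intro hiL
      rcases Nat.lt_or_ge j (i + 1) with h | h
      · exact ((hstep i hiL).1.subset).trans (ih (by omega) (by omega))
      · have : j = i + 1 := le_antisymm hji h
        subst this; exact subset_rfl
  -- fix zero case of hchain: j ≤ 0 means j = 0
  -- (handled by omega above? need to check)
  refine ⟨fun i => g i, ?_, ?_, ?_, ?_, ?_, ?_⟩
  · intro i
    have := hmem i i.isLt
    simpa using this
  · intro i hi
    exact (hstep i hi).1
  · intro i j hji
    have h1 : d (g (j : ℕ)) ∉ g ((j : ℕ) + 1) := (hstep j (by omega)).2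
    exact fun hx => h1 (hchain ((j : ℕ) + 1) i (by omega) i.isLt hx)
  · intro i j hji
    have hdi : d (g (i : ℕ)) ∈ g (i : ℕ) := by
      have := hmem i i.isLt
      exact hd ⟨i, i.isLt⟩ _ this
    exact hchain j i hji i.isLt hdi
  · intro i k hik
    have h1 : d (g (i : ℕ)) ∉ g ((i : ℕ) + 1) := (hstep i (by omega)).2
    exact fun hx => h1 (hchain ((i : ℕ) + 1) k (by omega) k.isLt hx)
  · intro a b hab
    by_contra hne
    have hdi : ∀ m : Fin L, d (g (m : ℕ)) ∈ g (m : ℕ) := fun m =>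
      hd ⟨m, m.isLt⟩ _ (hmem m m.isLt)
    have hout : ∀ (x y : Fin L), x < y → d (g (x : ℕ)) ∉ g (y : ℕ) := by
      intro x y hxy hx
      exact (hstep x (by omega)).2 (hchain ((x : ℕ) + 1) y (by omega) y.isLt hx)
    have hab' : d (g (a : ℕ)) = d (g (b : ℕ)) := hab
    rcases lt_or_gt_of_ne hne with h | h
    · exact hout a b h (hab' ▸ hdi b)
    · exact hout b a h (hab' ▸ hdi a)
end

section
/- Let H be a PICOD problem on m messages with at least one client, in which every request-set R_1,...,R_n is nonempty, and let q be any prime power. Then β_q(H) = 1 if and only if there exist choices d_i ∈ R_i for every i ∈ [n] such that the set {d_1,...,d_n} is an independent set of H. -/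
/-- For a PICOD problem with at least one client and all
request-sets nonempty, and any prime power field `F`, `β_q(H) = 1` iff there
are decoding choices `d i ∈ R i` such that `{d 1, ..., d n}` is an independent
set of `H` (every edge contains at most one of the chosen vertices). -/
theorem picod_beta_eq_one_iff (m n : ℕ) (hn : 0 < n)
    (R : Fin n → Finset (Fin m))
    (hR : ∀ i, (R i).Nonempty)
    (F : Type) [Field F] [Fintype F] :
    picodBeta R F = 1 ↔
      ∃ d : Fin n → Fin m, (∀ i, d i ∈ R i) ∧
        ∀ j, ((R j) ∩ (Finset.univ.image d)).card ≤ 1 := by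
  constructor
  · intro hβ
    -- extract a scheme of length 1
    have hne : {ℓ | HasPICODScheme R F ℓ}.Nonempty := by
      by_contra h
      rw [Set.not_nonempty_iff_eq_empty] at h
      unfold picodBeta at hβ
      rw [h] at hβ
      simp at hβ
    have hmem' : sInf {ℓ | HasPICODScheme R F ℓ} ∈ {ℓ | HasPICODScheme R F ℓ} :=
      Nat.sInf_mem hne
    unfold picodBeta at hβ
    rw [hβ] at hmem'
    obtain ⟨Enc, d, Dec, hd, hDec⟩ := hmem'
    refine ⟨d, hd, ?_⟩
    intro j
    by_contra hcard
    push_neg at hcard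
    obtain ⟨u, hu, v, hv, huv⟩ := Finset.one_lt_card.mp hcard
    rw [Finset.mem_inter] at hu hv
    obtain ⟨huR, hui⟩ := hu
    obtain ⟨hvR, hvi⟩ := hv
    obtain ⟨i₁, -, hi₁⟩ := Finset.mem_image.mp hui
    obtain ⟨i₂, -, hi₂⟩ := Finset.mem_image.mp hvi
    -- Enc is injective in each chosen coordinate
    have hinj : ∀ (i : Fin n) (b : Fin m → F),
        Function.Injective (fun a : F => Enc (Function.update b (d i) a) 0) := by
      intro i b a a' h
      have hEnc : Enc (Function.update b (d i) a) = Enc (Function.update b (d i) a') := by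
        funext x
        rw [Subsingleton.elim x 0]
        exact h
      have hside : (fun (k : {k : Fin m // k ∉ R i}) => Function.update b (d i) a k.1)
          = (fun k => Function.update b (d i) a' k.1) := by
        funext k
        have hk : k.1 ≠ d i := fun hh => k.2 (hh ▸ hd i)
        simp [Function.update_of_ne hk]
      have h1 := hDec i (Function.update b (d i) a)
      have h2 := hDec i (Function.update b (d i) a')
      rw [hEnc, hside] at h1
      rw [h1] at h2
      simpa using h2
    have hsurj : ∀ (i : Fin n) (b : Fin m → F) (y : F),
        ∃ c, Enc (Function.update b (d i) c) 0 = y := by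
      intro i b y
      exact Finite.injective_iff_surjective.mp (hinj i b) y
    -- key contradiction
    have key : ∀ (i : Fin n), d i ∈ R j → d i ≠ d j → False := by
      intro i hwRj hwdj
      set b' : Fin m → F := Function.update (0 : Fin m → F) (d j) 1 with hb'
      obtain ⟨c, hc⟩ := hsurj i b' (Enc 0 0)
      set b'' : Fin m → F := Function.update b' (d i) c with hb''
      have hEnc : Enc b'' = Enc 0 := by
        funext x
        rw [Subsingleton.elim x 0]
        exact hc
      have hside : (fun (k : {k : Fin m // k ∉ R j}) => b'' k.1)
          = (fun k => (0 : Fin m → F) k.1) := by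
        funext k
        have hk1 : k.1 ≠ d i := fun hh => k.2 (hh ▸ hwRj)
        have hk2 : k.1 ≠ d j := fun hh => k.2 (hh ▸ hd j)
        simp [hb'', hb', Function.update_of_ne hk1, Function.update_of_ne hk2]
      have h1 := hDec j b''
      have h2 := hDec j 0
      rw [hEnc, hside] at h1
      rw [h1] at h2
      have hval : b'' (d j) = 1 := by
        rw [hb'', Function.update_of_ne (Ne.symm hwdj), hb', Function.update_self]
      rw [hval] at h2
      exact one_ne_zero h2
    by_cases hcase : u = d j
    · exact key i₂ (hi₂ ▸ hvR) (by rw [hi₂, ← hcase]; exact fun hh => huv hh.symm)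
    · exact key i₁ (hi₁ ▸ huR) (by rw [hi₁]; exact hcase)
  · rintro ⟨d, hd, hind⟩
    classical
    -- scheme of length 1
    have h1 : HasPICODScheme R F 1 := by
      refine ⟨fun b _ => ∑ v ∈ Finset.univ.image d, b v, d,
        fun i c s => c 0 - ∑ v ∈ (Finset.univ.image d).erase (d i),
          (if h : v ∉ R i then s ⟨v, h⟩ else 0), hd, ?_⟩
      intro i b
      have hmem : d i ∈ Finset.univ.image d := Finset.mem_image_of_mem d (Finset.mem_univ i)
      have hnotin : ∀ v ∈ (Finset.univ.image d).erase (d i), v ∉ R i := by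
        intro v hv hvR
        have hv1 : v ≠ d i := Finset.ne_of_mem_erase hv
        have hv2 : v ∈ Finset.univ.image d := Finset.mem_of_mem_erase hv
        have hlt : 1 < ((R i) ∩ (Finset.univ.image d)).card := by
          refine Finset.one_lt_card.mpr ⟨v, ?_, d i, ?_, hv1⟩
          · exact Finset.mem_inter.mpr ⟨hvR, hv2⟩
          · exact Finset.mem_inter.mpr ⟨hd i, hmem⟩
        have := hind i
        omega
      have hsum : ∑ v ∈ (Finset.univ.image d).erase (d i),
          (if h : v ∉ R i then b v else 0) = ∑ v ∈ (Finset.univ.image d).erase (d i), b v :=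
        Finset.sum_congr rfl (fun v hv => dif_pos (hnotin v hv))
      simp only [hsum]
      rw [← Finset.add_sum_erase _ b hmem]
      ring
    have h0 : ¬ HasPICODScheme R F 0 := by
      rintro ⟨Enc, d, Dec, hd, hDec⟩
      set i0 : Fin n := ⟨0, hn⟩
      have h1 := hDec i0 0
      have h2 := hDec i0 (Function.update (0 : Fin m → F) (d i0) 1)
      have hEnc : Enc (Function.update (0 : Fin m → F) (d i0) 1) = Enc 0 := by
        funext x; exact x.elim0
      have hside : (fun (k : {k : Fin m // k ∉ R i0}) =>
          Function.update (0 : Fin m → F) (d i0) 1 k.1) = (fun k => (0 : Fin m → F) k.1) := by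
        funext k
        have hk : k.1 ≠ d i0 := fun hh => k.2 (hh ▸ hd i0)
        simp [Function.update_of_ne hk]
      rw [hEnc, hside] at h2
      rw [h1] at h2
      simp at h2
    have hle : sInf {ℓ | HasPICODScheme R F ℓ} ≤ 1 := Nat.sInf_le h1
    have hmem : sInf {ℓ | HasPICODScheme R F ℓ} ∈ {ℓ | HasPICODScheme R F ℓ} :=
      Nat.sInf_mem ⟨1, h1⟩
    unfold picodBeta
    rcases Nat.lt_or_ge (sInf {ℓ | HasPICODScheme R F ℓ}) 1 with h | h
    · exact absurd hmem (by rw [Nat.lt_one_iff.mp h]; exact h0)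
    · omega
end

section
/- Consider the PICOD problem H on 12 messages with vertex set V = {1,...,12} and the 12 request-sets R_1 = {1,2,3,4,5,6,8,10,12}, R_2 = {1,2,4,8}, R_3 = {3,5,6,10}, R_4 = {1,2,8}, R_5 = {4}, R_6 = {5,10}, R_7 = {3}, R_8 = {1,7,9}, R_9 = {3,9}, R_10 = {11}, R_11 = {1,11,12}, R_12 = {2,11}. Then for every prime power q, β_q(H) = 3: the three transmissions x_1 = b_1 + b_3 + b_4 + b_5, x_2 = b_2 + b_6, x_3 = b_4 + b_11 form a PICOD scheme of length 3 over F_q, and no PICOD scheme over F_q of length less than 3 exists. -/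
/-- The request-sets of Example 1 (vertices `{1,...,12}` renamed `0,...,11`):
`R_1 = {1,2,3,4,5,6,8,10,12}`, `R_2 = {1,2,4,8}`, `R_3 = {3,5,6,10}`,
`R_4 = {1,2,8}`, `R_5 = {4}`, `R_6 = {5,10}`, `R_7 = {3}`, `R_8 = {1,7,9}`,
`R_9 = {3,9}`, `R_10 = {11}`, `R_11 = {1,11,12}`, `R_12 = {2,11}`. -/
def exampleOneR : Fin 12 → Finset (Fin 12) :=
  ![{0, 1, 2, 3, 4, 5, 7, 9, 11}, {0, 1, 3, 7}, {2, 4, 5, 9}, {0, 1, 7},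
    {3}, {4, 9}, {2}, {0, 6, 8}, {2, 8}, {10}, {0, 10, 11}, {1, 10}]

/-- Chain-of-nested-edges lower bound. -/
lemma picod_chain_le {V ι F : Type} [DecidableEq V] [Field F] [Fintype F]
    (R : ι → Finset V) {ℓ : ℕ}
    (Enc : (V → F) → (Fin ℓ → F)) (d : ι → V)
    (Dec : (i : ι) → (Fin ℓ → F) → ({j : V // j ∉ R i} → F) → F)
    (hd : ∀ i, d i ∈ R i)
    (hdec : ∀ (i : ι) (b : V → F), Dec i (Enc b) (fun j => b j.1) = b (d i))
    (i0 i1 i2 : ι)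
    (h10 : R i1 ⊆ R i0) (h21 : R i2 ⊆ R i1)
    (hd0 : d i0 ∉ R i1) (hd1 : d i1 ∉ R i2) : 3 ≤ ℓ := by
  classical
  have hv02 : d i0 ∉ R i2 := fun h => hd0 (h21 h)
  have h10' : d i1 ≠ d i0 := fun h => hd0 (h ▸ hd i1)
  have h20' : d i2 ≠ d i0 := fun h => hv02 (h ▸ hd i2)
  have h21' : d i2 ≠ d i1 := fun h => hd1 (h ▸ hd i2)
  set b : (Fin 3 → F) → V → F := fun t v =>
    if v = d i0 then t 0 else if v = d i1 then t 1 else if v = d i2 then t 2 else 0 with hb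
  have hb0 : ∀ t, b t (d i0) = t 0 := fun t => if_pos rfl
  have hb1 : ∀ t, b t (d i1) = t 1 := by
    intro t; simp only [hb, if_neg h10', if_pos rfl, if_true]
  have hb2 : ∀ t, b t (d i2) = t 2 := by
    intro t; simp only [hb, if_neg h20', if_neg h21', if_pos rfl, if_true]
  have hg : Function.Injective (fun t => Enc (b t)) := by
    intro t s h
    simp only at h
    -- step 0
    have σ0 : (fun j : {j : V // j ∉ R i0} => b t j.1) = (fun j => b s j.1) := by
      funext j
      have hj0 : j.1 ≠ d i0 := fun e => j.2 (e ▸ hd i0)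
      have hj1 : j.1 ≠ d i1 := fun e => j.2 (e ▸ h10 (hd i1))
      have hj2 : j.1 ≠ d i2 := fun e => j.2 (e ▸ h10 (h21 (hd i2)))
      simp only [hb, if_neg hj0, if_neg hj1, if_neg hj2]
    have e0 : t 0 = s 0 := by
      have h1 := hdec i0 (b t); have h2 := hdec i0 (b s)
      rw [hb0] at h1; rw [hb0] at h2
      rw [← h1, ← h2, h, σ0]
    have σ1 : (fun j : {j : V // j ∉ R i1} => b t j.1) = (fun j => b s j.1) := by
      funext j
      have hj1 : j.1 ≠ d i1 := fun e => j.2 (e ▸ hd i1)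
      have hj2 : j.1 ≠ d i2 := fun e => j.2 (e ▸ h21 (hd i2))
      by_cases hj0 : j.1 = d i0
      · simp only [hb, if_pos hj0, e0]
      · simp only [hb, if_neg hj0, if_neg hj1, if_neg hj2]
    have e1 : t 1 = s 1 := by
      have h1 := hdec i1 (b t); have h2 := hdec i1 (b s)
      rw [hb1] at h1; rw [hb1] at h2
      rw [← h1, ← h2, h, σ1]
    have σ2 : (fun j : {j : V // j ∉ R i2} => b t j.1) = (fun j => b s j.1) := by
      funext j
      have hj2 : j.1 ≠ d i2 := fun e => j.2 (e ▸ hd i2)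
      by_cases hj0 : j.1 = d i0
      · simp only [hb, if_pos hj0, e0]
      · by_cases hj1 : j.1 = d i1
        · simp only [hb, if_neg hj0, if_pos hj1, e1]
        · simp only [hb, if_neg hj0, if_neg hj1, if_neg hj2]
    have e2 : t 2 = s 2 := by
      have h1 := hdec i2 (b t); have h2 := hdec i2 (b s)
      rw [hb2] at h1; rw [hb2] at h2
      rw [← h1, ← h2, h, σ2]
    funext j
    fin_cases j <;> assumption
  have hcard := Fintype.card_le_of_injective _ hg
  rw [Fintype.card_fun, Fintype.card_fun, Fintype.card_fin, Fintype.card_fin] at hcard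
  exact (Nat.pow_le_pow_iff_right Fintype.one_lt_card).mp hcard

lemma picod_example_lb {F : Type} [Field F] [Fintype F] :
    ∀ ℓ : ℕ, (∃ (Enc : (Fin 12 → F) → (Fin ℓ → F)) (d : Fin 12 → Fin 12)
      (Dec : (i : Fin 12) → (Fin ℓ → F) → ({j : Fin 12 // j ∉ exampleOneR i} → F) → F),
      (∀ i, d i ∈ exampleOneR i) ∧
      ∀ (i : Fin 12) (b : Fin 12 → F), Dec i (Enc b) (fun j => b j.1) = b (d i)) → 3 ≤ ℓ := by
  intro ℓ ⟨Enc, d, Dec, hd, hdec⟩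
  by_cases hc : d 0 ∈ exampleOneR 1
  · have hd0 : d 0 ∉ exampleOneR 2 :=
      (by decide : ∀ x : Fin 12, x ∈ exampleOneR 1 → x ∉ exampleOneR 2) _ hc
    by_cases hc2 : d 2 ∈ exampleOneR 6
    · exact picod_chain_le exampleOneR Enc d Dec hd hdec 0 2 5 (by decide) (by decide) hd0
        ((by decide : ∀ x : Fin 12, x ∈ exampleOneR 6 → x ∉ exampleOneR 5) _ hc2)
    · exact picod_chain_le exampleOneR Enc d Dec hd hdec 0 2 6 (by decide) (by decide) hd0 hc2
  · by_cases hc1 : d 1 ∈ exampleOneR 4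
    · exact picod_chain_le exampleOneR Enc d Dec hd hdec 0 1 3 (by decide) (by decide) hc
        ((by decide : ∀ x : Fin 12, x ∈ exampleOneR 4 → x ∉ exampleOneR 3) _ hc1)
    · exact picod_chain_le exampleOneR Enc d Dec hd hdec 0 1 4 (by decide) (by decide) hc hc1

def exD : Fin 12 → Fin 12 :=
  fun i => match i with
  | ⟨0, _⟩ => 3 | ⟨1, _⟩ => 3 | ⟨2, _⟩ => 5 | ⟨3, _⟩ => 0 | ⟨4, _⟩ => 3 | ⟨5, _⟩ => 4
  | ⟨6, _⟩ => 2 | ⟨7, _⟩ => 0 | ⟨8, _⟩ => 2 | ⟨9, _⟩ => 10 | ⟨10, _⟩ => 10 | ⟨11, _⟩ => 1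

def exDec (F : Type) [Field F] :
    (i : Fin 12) → (Fin 3 → F) → ({j : Fin 12 // j ∉ exampleOneR i} → F) → F :=
  fun i =>
    match i with
    | ⟨0, _⟩ => fun x σ => x 2 - σ ⟨10, (by decide : (10:Fin 12) ∉ exampleOneR 0)⟩
    | ⟨1, _⟩ => fun x σ => x 2 - σ ⟨10, (by decide : (10:Fin 12) ∉ exampleOneR 1)⟩
    | ⟨2, _⟩ => fun x σ => x 1 - σ ⟨1, (by decide : (1:Fin 12) ∉ exampleOneR 2)⟩
    | ⟨3, _⟩ => fun x σ => x 0 - σ ⟨2, (by decide : (2:Fin 12) ∉ exampleOneR 3)⟩ - σ ⟨3, (by decide : (3:Fin 12) ∉ exampleOneR 3)⟩ - σ ⟨4, (by decide : (4:Fin 12) ∉ exampleOneR 3)⟩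
    | ⟨4, _⟩ => fun x σ => x 2 - σ ⟨10, (by decide : (10:Fin 12) ∉ exampleOneR 4)⟩
    | ⟨5, _⟩ => fun x σ => x 0 - σ ⟨0, (by decide : (0:Fin 12) ∉ exampleOneR 5)⟩ - σ ⟨2, (by decide : (2:Fin 12) ∉ exampleOneR 5)⟩ - σ ⟨3, (by decide : (3:Fin 12) ∉ exampleOneR 5)⟩
    | ⟨6, _⟩ => fun x σ => x 0 - σ ⟨0, (by decide : (0:Fin 12) ∉ exampleOneR 6)⟩ - σ ⟨3, (by decide : (3:Fin 12) ∉ exampleOneR 6)⟩ - σ ⟨4, (by decide : (4:Fin 12) ∉ exampleOneR 6)⟩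
    | ⟨7, _⟩ => fun x σ => x 0 - σ ⟨2, (by decide : (2:Fin 12) ∉ exampleOneR 7)⟩ - σ ⟨3, (by decide : (3:Fin 12) ∉ exampleOneR 7)⟩ - σ ⟨4, (by decide : (4:Fin 12) ∉ exampleOneR 7)⟩
    | ⟨8, _⟩ => fun x σ => x 0 - σ ⟨0, (by decide : (0:Fin 12) ∉ exampleOneR 8)⟩ - σ ⟨3, (by decide : (3:Fin 12) ∉ exampleOneR 8)⟩ - σ ⟨4, (by decide : (4:Fin 12) ∉ exampleOneR 8)⟩
    | ⟨9, _⟩ => fun x σ => x 2 - σ ⟨3, (by decide : (3:Fin 12) ∉ exampleOneR 9)⟩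
    | ⟨10, _⟩ => fun x σ => x 2 - σ ⟨3, (by decide : (3:Fin 12) ∉ exampleOneR 10)⟩
    | ⟨11, _⟩ => fun x σ => x 1 - σ ⟨5, (by decide : (5:Fin 12) ∉ exampleOneR 11)⟩

lemma exD_mem : ∀ i, exD i ∈ exampleOneR i := by decide

lemma exDec_correct (F : Type) [Field F] :
    ∀ (i : Fin 12) (b : Fin 12 → F),
      exDec F i ![b 0 + b 2 + b 3 + b 4, b 1 + b 5, b 3 + b 10]
        (fun j => b j.1) = b (exD i) := by
  intro i b
  fin_cases i <;> simp [exDec, exD, exampleOneR] <;> ring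

lemma picod_example_lb' {F : Type} [Field F] [Fintype F] :
    ∀ ℓ : ℕ, HasPICODScheme exampleOneR F ℓ → 3 ≤ ℓ := by
  intro ℓ h
  exact picod_example_lb ℓ h


/-- For the PICOD problem of Example 1 and every prime power
field `F`, `β_q(H) = 3`: the three transmissions `x_1 = b_1 + b_3 + b_4 + b_5`,
`x_2 = b_2 + b_6`, `x_3 = b_4 + b_11` (in `0`-based indexing:
`b 0 + b 2 + b 3 + b 4`, `b 1 + b 5`, `b 3 + b 10`) form a PICOD scheme of
length `3`, and no PICOD scheme of length less than `3` exists. -/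
theorem picod_example_one (F : Type) [Field F] [Fintype F] :
    picodBeta exampleOneR F = 3 ∧
    (∃ (d : Fin 12 → Fin 12)
      (Dec : (i : Fin 12) → (Fin 3 → F) →
        ({j : Fin 12 // j ∉ exampleOneR i} → F) → F),
      (∀ i, d i ∈ exampleOneR i) ∧
      ∀ (i : Fin 12) (b : Fin 12 → F),
        Dec i ![b 0 + b 2 + b 3 + b 4, b 1 + b 5, b 3 + b 10]
          (fun j => b j.1) = b (d i)) ∧
    (∀ ℓ : ℕ, HasPICODScheme exampleOneR F ℓ → 3 ≤ ℓ) := by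
  have h3 : HasPICODScheme exampleOneR F 3 :=
    ⟨fun b => ![b 0 + b 2 + b 3 + b 4, b 1 + b 5, b 3 + b 10], exD, exDec F,
      exD_mem, exDec_correct F⟩
  refine ⟨?_, ⟨exD, exDec F, exD_mem, exDec_correct F⟩, picod_example_lb' (F := F)⟩
  refine le_antisymm (Nat.sInf_le h3) (le_csInf ⟨3, h3⟩ ?_)
  intro b hb
  exact picod_example_lb' (F := F) b hb
end

section
/- Consider the PICOD problem H on 9 messages with vertex set V = {1,...,9} and the 9 request-sets R_i = {i} for i ∈ {1,...,6}, R_7 = {1,2,7,8}, R_8 = {3,4,7,9}, R_9 = {5,6,8,9}. Then for every prime power q, β_q(H) = 2: the two transmissions x_1 = b_1 + b_3 + b_5 and x_2 = b_2 + b_4 + b_6 form a PICOD scheme of length 2 over F_q, and no PICOD scheme over F_q of length less than 2 exists. -/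
/-- The request-sets of Example 2 (vertices `{1,...,9}` renamed `0,...,8`):
`R_i = {i}` for `i ∈ {1,...,6}`, `R_7 = {1,2,7,8}`, `R_8 = {3,4,7,9}`,
`R_9 = {5,6,8,9}`. -/
def exampleTwoR : Fin 9 → Finset (Fin 9) :=
  ![{0}, {1}, {2}, {3}, {4}, {5}, {0, 1, 6, 7}, {2, 3, 6, 8}, {4, 5, 7, 8}]

def dEx : Fin 9 → Fin 9 := ![0, 1, 2, 3, 4, 5, 0, 2, 4]

def DecEx (F : Type) [Field F] :
    (i : Fin 9) → (Fin 2 → F) → ({j : Fin 9 // j ∉ exampleTwoR i} → F) → F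
  | 0 => fun x s => x 0 - s ⟨2, by decide⟩ - s ⟨4, by decide⟩
  | 1 => fun x s => x 1 - s ⟨3, by decide⟩ - s ⟨5, by decide⟩
  | 2 => fun x s => x 0 - s ⟨0, by decide⟩ - s ⟨4, by decide⟩
  | 3 => fun x s => x 1 - s ⟨1, by decide⟩ - s ⟨5, by decide⟩
  | 4 => fun x s => x 0 - s ⟨0, by decide⟩ - s ⟨2, by decide⟩
  | 5 => fun x s => x 1 - s ⟨1, by decide⟩ - s ⟨3, by decide⟩
  | 6 => fun x s => x 0 - s ⟨2, by decide⟩ - s ⟨4, by decide⟩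
  | 7 => fun x s => x 0 - s ⟨0, by decide⟩ - s ⟨4, by decide⟩
  | 8 => fun x s => x 0 - s ⟨0, by decide⟩ - s ⟨2, by decide⟩

lemma dEx_mem : ∀ i, dEx i ∈ exampleTwoR i := by decide

lemma DecEx_correct (F : Type) [Field F] :
    ∀ (i : Fin 9) (b : Fin 9 → F),
      DecEx F i ![b 0 + b 2 + b 4, b 1 + b 3 + b 5] (fun j => b j.1) = b (dEx i) := by
  intro i b
  fin_cases i
  · show b 0 + b 2 + b 4 - b 2 - b 4 = b 0; ring
  · show b 1 + b 3 + b 5 - b 3 - b 5 = b 1; ring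
  · show b 0 + b 2 + b 4 - b 0 - b 4 = b 2; ring
  · show b 1 + b 3 + b 5 - b 1 - b 5 = b 3; ring
  · show b 0 + b 2 + b 4 - b 0 - b 2 = b 4; ring
  · show b 1 + b 3 + b 5 - b 1 - b 3 = b 5; ring
  · show b 0 + b 2 + b 4 - b 2 - b 4 = b 0; ring
  · show b 0 + b 2 + b 4 - b 0 - b 4 = b 2; ring
  · show b 0 + b 2 + b 4 - b 0 - b 2 = b 4; ring

lemma picod_inj {F : Type} [Field F] {ℓ : ℕ}
    (Enc : (Fin 9 → F) → (Fin ℓ → F)) (d : Fin 9 → Fin 9)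
    (Dec : (i : Fin 9) → (Fin ℓ → F) → ({j : Fin 9 // j ∉ exampleTwoR i} → F) → F)
    (hd : ∀ i, d i ∈ exampleTwoR i)
    (hdec : ∀ i b, Dec i (Enc b) (fun j => b j.1) = b (d i))
    (w : Fin 9) (hw : exampleTwoR w = {w}) (c : Fin 9 → F) :
    Function.Injective (fun t => Enc (Function.update c w t)) := by
  intro t t' h
  have hdw : d w = w := by
    have := hd w; rw [hw, Finset.mem_singleton] at this; exact this
  have hside : (fun j : {j : Fin 9 // j ∉ exampleTwoR w} => Function.update c w t j.1)
      = fun j => Function.update c w t' j.1 := by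
    funext j
    have hj : j.1 ≠ w := by
      intro hh; exact j.2 (by rw [hh, hw]; exact Finset.mem_singleton_self w)
    rw [Function.update_of_ne hj, Function.update_of_ne hj]
  have h1 := hdec w (Function.update c w t)
  have h2 := hdec w (Function.update c w t')
  rw [hdw, Function.update_self] at h1 h2
  rw [show Enc (Function.update c w t) = Enc (Function.update c w t') from h, hside] at h1
  rw [h1] at h2
  exact h2

lemma picod_no_zero {F : Type} [Field F] : ¬ HasPICODScheme exampleTwoR F 0 := by
  rintro ⟨Enc, d, Dec, hd, hdec⟩
  have hd0 : d 0 = 0 := by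
    have := hd 0
    rw [show exampleTwoR 0 = {0} from rfl, Finset.mem_singleton] at this
    exact this
  have h1 := hdec 0 (fun _ => (0 : F))
  have h2 := hdec 0 (Function.update (fun _ => (0 : F)) 0 1)
  have hEnc : Enc (Function.update (fun _ => (0 : F)) 0 1) = Enc (fun _ => 0) :=
    funext fun k => k.elim0
  have hside : (fun j : {j : Fin 9 // j ∉ exampleTwoR 0} =>
      Function.update (fun _ => (0 : F)) 0 1 j.1) = fun _ => (0 : F) := by
    funext j
    have hj : j.1 ≠ 0 := by
      intro hh; exact j.2 (by rw [hh]; decide)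
    rw [Function.update_of_ne hj]
  rw [hEnc, hside, hd0, Function.update_self] at h2
  rw [h1] at h2
  exact one_ne_zero h2.symm

lemma picod_no_one {F : Type} [Field F] [Fintype F] :
    ¬ HasPICODScheme exampleTwoR F 1 := by
  rintro ⟨Enc, d, Dec, hd, hdec⟩
  set v : Fin 9 := d 6 with hv
  have hv6 : v ∈ exampleTwoR 6 := hd 6
  set w : Fin 9 := if v = 0 then 1 else 0 with hw
  have hwv : w ≠ v := by
    rcases eq_or_ne v 0 with h | h
    · rw [hw, if_pos h, h]; decide
    · rw [hw, if_neg h]; exact fun hh => h hh.symm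
  have hwsing : exampleTwoR w = {w} := by
    rcases eq_or_ne v 0 with h | h
    · rw [hw, if_pos h]; rfl
    · rw [hw, if_neg h]; rfl
  have hw6 : w ∈ exampleTwoR 6 := by
    rcases eq_or_ne v 0 with h | h
    · rw [hw, if_pos h]; decide
    · rw [hw, if_neg h]; decide
  set c : Fin 9 → F := Function.update (fun _ => (0 : F)) v 1 with hc
  -- surjectivity of t ↦ Enc (update c w t) 0
  have hinj : Function.Injective (fun t : F => Enc (Function.update c w t) 0) := by
    intro t t' h
    have := picod_inj Enc d Dec hd hdec w hwsing c (a₁ := t) (a₂ := t') ?_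
    · exact this
    · funext k
      have hk : k = 0 := Subsingleton.elim k 0
      rw [hk]; exact h
  have hsurj := (Finite.injective_iff_surjective).mp hinj
  obtain ⟨t, ht⟩ := hsurj (Enc (fun _ => 0) 0)
  set b' : Fin 9 → F := Function.update c w t with hb'
  have hEnc : Enc b' = Enc (fun _ => 0) := by
    funext k
    have hk : k = 0 := Subsingleton.elim k 0
    rw [hk]; exact ht
  have hside : (fun j : {j : Fin 9 // j ∉ exampleTwoR 6} => b' j.1)
      = fun j : {j : Fin 9 // j ∉ exampleTwoR 6} => (fun _ : Fin 9 => (0 : F)) j.1 := by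
    funext j
    have hjv : j.1 ≠ v := fun h => j.2 (h ▸ hv6)
    have hjw : j.1 ≠ w := fun h => j.2 (h ▸ hw6)
    rw [hb', Function.update_of_ne hjw, hc, Function.update_of_ne hjv]
  have h1 := hdec 6 b'
  have h2 := hdec 6 (fun _ => (0 : F))
  rw [hEnc, hside] at h1
  rw [h1] at h2
  have hb'v : b' v = 1 := by
    rw [hb', Function.update_of_ne (fun h => hwv h.symm), hc, Function.update_self]
  rw [← hv] at h2
  rw [hb'v] at h2
  exact one_ne_zero h2

/-- For the PICOD problem of Example 2 and every prime power
field `F`, `β_q(H) = 2`: the two transmissions `x_1 = b_1 + b_3 + b_5` and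
`x_2 = b_2 + b_4 + b_6` (in `0`-based indexing: `b 0 + b 2 + b 4` and
`b 1 + b 3 + b 5`) form a PICOD scheme of length `2`, and no PICOD scheme of
length less than `2` exists. -/
theorem picod_example_two (F : Type) [Field F] [Fintype F] :
    picodBeta exampleTwoR F = 2 ∧
    (∃ (d : Fin 9 → Fin 9)
      (Dec : (i : Fin 9) → (Fin 2 → F) →
        ({j : Fin 9 // j ∉ exampleTwoR i} → F) → F),
      (∀ i, d i ∈ exampleTwoR i) ∧
      ∀ (i : Fin 9) (b : Fin 9 → F),
        Dec i ![b 0 + b 2 + b 4, b 1 + b 3 + b 5]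
          (fun j => b j.1) = b (d i)) ∧
    (∀ ℓ : ℕ, HasPICODScheme exampleTwoR F ℓ → 2 ≤ ℓ) := by
  have hscheme : HasPICODScheme exampleTwoR F 2 :=
    ⟨fun b => ![b 0 + b 2 + b 4, b 1 + b 3 + b 5], dEx, DecEx F, dEx_mem, DecEx_correct F⟩
  have hlb : ∀ ℓ : ℕ, HasPICODScheme exampleTwoR F ℓ → 2 ≤ ℓ := by
    intro ℓ h
    match ℓ with
    | 0 => exact absurd h picod_no_zero
    | 1 => exact absurd h picod_no_one
    | (n + 2) => omega
  have h2mem : (2 : ℕ) ∈ {ℓ : ℕ | HasPICODScheme exampleTwoR F ℓ} := hscheme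
  refine ⟨?_, ⟨dEx, DecEx F, dEx_mem, DecEx_correct F⟩, hlb⟩
  exact le_antisymm (Nat.sInf_le h2mem) (hlb _ (Nat.sInf_mem ⟨2, h2mem⟩))
end
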